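/- arXiv:2603.02674 — 6 statements merged into one kernel-verified Lean document; each statement's English description precedes it below -/
import Mathlib

section
/- Under the standing hypotheses (M graded projective with each graded piece a finitely generated R-module), for all k, i ∈ P with k ≤ i, the structure map f_{k,i} : M_k → M_i given by multiplication by t^{i−k} is injective. -/
open scoped DirectSum

variable (P : Type) [AddCommGroup P] [Lattice P]
  [CovariantClass P P (· + ·) (· ≤ ·)] [DecidableEq P]
variable (R : Type) [CommRing R]

/-- The monoid algebra `R[U₀]` on the submonoid `U₀` of nonnegative elements of `P`. -/
abbrev PersAlg : Type := AddMonoidAlgebra R ↥(AddSubmonoid.nonneg P)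

/-- The monomial `t^p ∈ R[U₀]` for `p ≥ 0` (and `0` otherwise, a junk value). -/
noncomputable def tp (p : P) : PersAlg P R :=
  letI := Classical.dec (0 ≤ p)
  if h : 0 ≤ p then AddMonoidAlgebra.single (⟨p, h⟩ : ↥(AddSubmonoid.nonneg P)) 1 else 0

/-- A `P`-graded `R[U₀]`-module (persistence module): an `R[U₀]`-module together with an
internal direct sum decomposition `M = ⊕_{a ∈ P} M_a` into `R`-submodules such that
`t^s • M_a ⊆ M_{a+s}` for all `s ≥ 0`. -/
structure PersMod : Type 1 where
  carrier : Type
  [isAddCommGroup : AddCommGroup carrier]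
  [isModuleR : Module R carrier]
  [isModule : Module (PersAlg P R) carrier]
  [isTower : IsScalarTower R (PersAlg P R) carrier]
  deg : P → Submodule R carrier
  isInternal : DirectSum.IsInternal deg
  tp_smul_mem : ∀ (s : P), 0 ≤ s → ∀ (a : P) (x : carrier),
    x ∈ deg a → tp P R s • x ∈ deg (a + s)

attribute [instance] PersMod.isAddCommGroup PersMod.isModuleR PersMod.isModule PersMod.isTower

/-- Scalar multiplication by a fixed element of `R[U₀]`, as an `R`-linear map. -/
noncomputable def smulMapR (M : PersMod P R) (a : PersAlg P R) : M.carrier →ₗ[R] M.carrier :=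
  (LinearMap.lsmul (PersAlg P R) M.carrier a).restrictScalars R

/-- `D_r ⊆ M_r`, the sum of the images of all `M_q`, `q < r`, under `t^{r-q}`. -/
noncomputable def Dsub (M : PersMod P R) (r : P) : Submodule R M.carrier :=
  ⨆ q : {q : P // q < r}, Submodule.map (smulMapR P R M (tp P R (r - q.1))) (M.deg q.1)

/-- `M` is graded free: it admits an `R[U₀]`-basis of homogeneous elements. -/
def IsGradedFree (M : PersMod P R) : Prop :=
  ∃ (Λ : Type) (d : Λ → P) (b : Module.Basis Λ (PersAlg P R) M.carrier),
    ∀ η, b η ∈ M.deg (d η)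

/-- `M` is graded projective: it is a graded direct summand of a graded free module. -/
def IsGradedProjective (M : PersMod P R) : Prop :=
  ∃ F : PersMod P R, IsGradedFree P R F ∧
    ∃ (ι : M.carrier →ₗ[PersAlg P R] F.carrier) (π : F.carrier →ₗ[PersAlg P R] M.carrier),
      (∀ (a : P), ∀ x ∈ M.deg a, ι x ∈ F.deg a) ∧
      (∀ (a : P), ∀ x ∈ F.deg a, π x ∈ M.deg a) ∧
      π.comp ι = LinearMap.id

/-- An `R[U₀]`-submodule `S` of a graded module `F` is graded if it is the sum of its
homogeneous parts `S ∩ F_a`. -/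
def IsGradedSubmodule (F : PersMod P R) (S : Submodule (PersAlg P R) F.carrier) : Prop :=
  S.restrictScalars R = ⨆ a : P, (S.restrictScalars R ⊓ F.deg a)

/-- For a graded submodule `S ⊆ F`, the submodule `D_r` of sums of images of the homogeneous
pieces `S ∩ F_q`, `q < r`, under `t^{r-q}`. -/
noncomputable def DsubOf (F : PersMod P R) (S : Submodule (PersAlg P R) F.carrier) (r : P) :
    Submodule R F.carrier :=
  ⨆ q : {q : P // q < r},
    Submodule.map (smulMapR P R F (tp P R (r - q.1))) (S.restrictScalars R ⊓ F.deg q.1)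


lemma single_one_mul_eq_mapDomain (a : ↥(AddSubmonoid.nonneg P)) (f : PersAlg P R) :
    AddMonoidAlgebra.single a (1 : R) * f = AddMonoidAlgebra.mapDomain (a + ·) f := by
  induction f using AddMonoidAlgebra.induction_linear with
  | zero => simp
  | add f g hf hg => rw [mul_add, hf, hg, AddMonoidAlgebra.mapDomain_add]
  | single b c => rw [AddMonoidAlgebra.single_mul_single, one_mul, AddMonoidAlgebra.mapDomain_single]

lemma tp_regular (s : P) (hs : 0 ≤ s) {f g : PersAlg P R}
    (h : tp P R s * f = tp P R s * g) : f = g := by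
  unfold tp at h
  rw [dif_pos hs, single_one_mul_eq_mapDomain, single_one_mul_eq_mapDomain] at h
  have hinj : Function.Injective ((⟨s, hs⟩ : ↥(AddSubmonoid.nonneg P)) + ·) := by
    intro u v huv
    exact Subtype.ext (add_left_cancel (congrArg Subtype.val huv))
  exact AddMonoidAlgebra.mapDomain_injective hinj h

lemma smul_injective_of_free (F : PersMod P R) (hF : IsGradedFree P R F)
    (s : P) (hs : 0 ≤ s) {x y : F.carrier}
    (h : tp P R s • x = tp P R s • y) : x = y := by
  obtain ⟨Λ, d, b, -⟩ := hF
  apply b.repr.injective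
  have h2 : tp P R s • b.repr x = tp P R s • b.repr y := by
    rw [← map_smul, ← map_smul, h]
  refine Finsupp.ext fun η => ?_
  have h3 : tp P R s * b.repr x η = tp P R s * b.repr y η := by
    have := congrFun (congrArg DFunLike.coe h2) η
    simpa [Finsupp.smul_apply, smul_eq_mul] using this
  exact tp_regular P R s hs h3

theorem structure_map_injective [IsDomain R] [IsPrincipalIdealRing R]
    (M : PersMod P R) (hproj : IsGradedProjective P R M) (hFG : ∀ a : P, (M.deg a).FG)
    (k i : P) (hki : k ≤ i) :
    ∀ x ∈ M.deg k, ∀ y ∈ M.deg k, tp P R (i - k) • x = tp P R (i - k) • y → x = y := by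
  obtain ⟨F, hFfree, ι, π, hι, hπ, hπι⟩ := hproj
  intro x hx y hy h
  have hs : 0 ≤ i - k := sub_nonneg.2 hki
  have hid : ∀ z : M.carrier, π (ι z) = z := fun z => by
    rw [← LinearMap.comp_apply, hπι, LinearMap.id_apply]
  have h1 : tp P R (i - k) • ι x = tp P R (i - k) • ι y := by
    rw [← map_smul, ← map_smul, h]
  have h2 : ι x = ι y := smul_injective_of_free P R F hFfree _ hs h1
  rw [← hid x, ← hid y, h2]
end

section
/- Let F be a graded free R[U₀]-module with a basis {u_η}_{η∈Λ} of homogeneous elements and let 0 ≠ x ∈ F_i, written as x = Σ_{η∈I_x} c_η t^{i−|u_η|} u_η where I_x ⊆ Λ is finite and each c_η ∈ R is nonzero (so |u_η| ≤ i for all η ∈ I_x). Let m be the join in the lattice P of the finite set {|u_η| : η ∈ I_x}. Then m is the least element of S_x^F: m ∈ S_x^F, and m ≤ ℓ for every ℓ ∈ S_x^F. -/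
open scoped DirectSum

variable (P : Type) [AddCommGroup P] [Lattice P]
  [CovariantClass P P (· + ·) (· ≤ ·)] [DecidableEq P]
variable (R : Type) [CommRing R]

lemma tp_eq (p : P) (h : 0 ≤ p) :
    tp P R p = AddMonoidAlgebra.single (⟨p, h⟩ : ↥(AddSubmonoid.nonneg P)) (1:R) := by
  simp only [tp, dif_pos h]

lemma tp_mul_tp (p q : P) (hp : 0 ≤ p) (hq : 0 ≤ q) :
    tp P R p * tp P R q = tp P R (p + q) := by
  rw [tp_eq P R p hp, tp_eq P R q hq, tp_eq P R (p+q) (add_nonneg hp hq),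
    AddMonoidAlgebra.single_mul_single, one_mul]
  rfl

theorem birth_set_least_F [IsDomain R] [IsPrincipalIdealRing R]
    (F : PersMod P R) (Λ : Type) (d : Λ → P) (b : Module.Basis Λ (PersAlg P R) F.carrier)
    (hb : ∀ η, b η ∈ F.deg (d η))
    (i : P) (x : F.carrier) (hxi : x ∈ F.deg i) (hx0 : x ≠ 0)
    (I : Finset Λ) (hI : I.Nonempty) (c : Λ → R) (hc : ∀ η ∈ I, c η ≠ 0)
    (hdle : ∀ η ∈ I, d η ≤ i)
    (hrep : x = ∑ η ∈ I, c η • (tp P R (i - d η) • b η)) :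
    IsLeast {ℓ : P | ℓ ≤ i ∧ ∃ z ∈ F.deg ℓ, tp P R (i - ℓ) • z = x} (I.sup' hI d) := by
  classical
  set m := I.sup' hI d with hm
  have hmi : m ≤ i := Finset.sup'_le hI d hdle
  have hdm : ∀ η ∈ I, d η ≤ m := fun η hη => Finset.le_sup' d hη
  constructor
  · refine ⟨hmi, ∑ η ∈ I, (c η • tp P R (m - d η)) • b η, ?_, ?_⟩
    · refine Submodule.sum_mem _ fun η hη => ?_
      rw [smul_assoc]
      refine Submodule.smul_mem _ _ ?_
      have := F.tp_smul_mem (m - d η) (sub_nonneg.2 (hdm η hη)) (d η) (b η) (hb η)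
      rwa [add_sub_cancel] at this
    · rw [Finset.smul_sum, hrep]
      refine Finset.sum_congr rfl fun η hη => ?_
      rw [smul_smul, mul_smul_comm, tp_mul_tp P R _ _ (sub_nonneg.2 hmi)
        (sub_nonneg.2 (hdm η hη)), smul_assoc]
      congr 2
      abel
  · rintro ℓ ⟨hℓi, z, hz, hzx⟩
    rw [hm]
    refine Finset.sup'_le hI d fun η₀ hη₀ => ?_
    -- basis coefficient of x at η₀ via hrep
    have h1 : b.repr x η₀ = c η₀ • tp P R (i - d η₀) := by
      rw [hrep, map_sum, Finsupp.finset_sum_apply]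
      rw [Finset.sum_eq_single_of_mem η₀ hη₀]
      · rw [← smul_assoc, map_smul, Module.Basis.repr_self, Finsupp.smul_apply,
          Finsupp.single_eq_same, smul_eq_mul, mul_one]
      · intro η hη hne
        rw [← smul_assoc, map_smul, Module.Basis.repr_self, Finsupp.smul_apply,
          Finsupp.single_eq_of_ne hne.symm, smul_zero]
    have h2 : b.repr x η₀ = tp P R (i - ℓ) * b.repr z η₀ := by
      rw [← hzx, map_smul, Finsupp.smul_apply, smul_eq_mul]
    by_contra hnle
    have hkey : ¬∃ a : ↥(AddSubmonoid.nonneg P),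
        (⟨i - d η₀, sub_nonneg.2 (hdle η₀ hη₀)⟩ : ↥(AddSubmonoid.nonneg P))
          = ⟨i - ℓ, sub_nonneg.2 hℓi⟩ + a := by
      rintro ⟨a, ha⟩
      apply hnle
      have ha' : i - d η₀ = (i - ℓ) + a.1 := congrArg Subtype.val ha
      have : a.1 = ℓ - d η₀ := by
        have h2 : (i - ℓ) + a.1 = (i - ℓ) + (ℓ - d η₀) := by rw [← ha']; abel
        exact add_left_cancel h2
      have h0 : (0:P) ≤ ℓ - d η₀ := this ▸ a.2
      exact sub_nonneg.1 h0
    have := AddMonoidAlgebra.single_add_apply_of_not_exists_add (1:R) (b.repr z η₀) hkey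
    rw [← tp_eq P R (i - ℓ) (sub_nonneg.2 hℓi), ← h2, h1,
      tp_eq P R (i - d η₀) (sub_nonneg.2 (hdle η₀ hη₀))] at this
    rw [AddMonoidAlgebra.coeff_smul_apply, AddMonoidAlgebra.coeff_single, Finsupp.single_eq_same, smul_eq_mul, mul_one] at this
    exact hc η₀ hη₀ this
end

section
/- Under the standing hypotheses, let 0 ≠ x ∈ M_i be written in terms of the homogeneous basis of F as x = Σ_{η∈I_x} c_η t^{i−|u_η|} u_η with I_x finite and each c_η ∈ R nonzero, and let m be the join in P of {|u_η| : η ∈ I_x}. Then m is the least element of S_x^M: m ∈ S_x^M and m ≤ ℓ for every ℓ ∈ S_x^M. -/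
open scoped DirectSum

variable (P : Type) [AddCommGroup P] [Lattice P]
  [CovariantClass P P (· + ·) (· ≤ ·)] [DecidableEq P]
variable (R : Type) [CommRing R]

section Aux

variable {P : Type} [AddCommGroup P] [Lattice P]
  [CovariantClass P P (· + ·) (· ≤ ·)] [DecidableEq P]
variable {R : Type} [CommRing R]

instance : IsLeftCancelAdd ↥(AddSubmonoid.nonneg P) :=
  ⟨fun a b c h => Subtype.ext (by
    have : (a : P) + b = (a : P) + c := congrArg Subtype.val h
    exact add_left_cancel this)⟩

theorem tp_add {a b : P} (ha : 0 ≤ a) (hb : 0 ≤ b) :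
    tp P R (a + b) = tp P R a * tp P R b := by
  rw [tp, tp, tp, dif_pos (add_nonneg ha hb), dif_pos ha, dif_pos hb,
    AddMonoidAlgebra.single_mul_single, one_mul]
  rfl

theorem decompose_mem_of_graded (F : PersMod P R)
    (S : Submodule (PersAlg P R) F.carrier) (hS : IsGradedSubmodule P R F S)
    [DirectSum.Decomposition F.deg] (m : P) {v : F.carrier} (hv : v ∈ S) :
    (DirectSum.decompose F.deg v m : F.carrier) ∈ S := by
  have hv' : v ∈ ⨆ a : P, (S.restrictScalars R ⊓ F.deg a) := by
    rw [← hS]; exact hv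
  refine Submodule.iSup_induction (motive := fun w => (DirectSum.decompose F.deg w m : F.carrier) ∈ S)
    _ hv' (fun a w hw => ?_) ?_ (fun w w' hw hw' => ?_)
  · rcases hw with ⟨hwS, hwa⟩
    by_cases hma : a = m
    · rw [DirectSum.decompose_of_mem_same F.deg (hma ▸ hwa)]; exact hwS
    · rw [DirectSum.decompose_of_mem_ne F.deg hwa hma]; exact S.zero_mem
  · show (DirectSum.decompose F.deg (0 : F.carrier) m : F.carrier) ∈ S
    rw [DirectSum.decompose_zero]; simpa using S.zero_mem
  · show (DirectSum.decompose F.deg (w + w') m : F.carrier) ∈ S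
    rw [DirectSum.decompose_add, DirectSum.add_apply, Submodule.coe_add]
    exact S.add_mem hw hw'

end Aux

theorem birth_set_least_M [IsDomain R] [IsPrincipalIdealRing R]
    (F : PersMod P R) (Λ : Type) (d : Λ → P) (b : Module.Basis Λ (PersAlg P R) F.carrier)
    (hb : ∀ η, b η ∈ F.deg (d η))
    (M N : Submodule (PersAlg P R) F.carrier)
    (hM : IsGradedSubmodule P R F M) (hN : IsGradedSubmodule P R F N)
    (hcompl : IsCompl M N)
    (hFG : ∀ a : P, (M.restrictScalars R ⊓ F.deg a).FG)
    (i : P) (x : F.carrier) (hxM : x ∈ M) (hxi : x ∈ F.deg i) (hx0 : x ≠ 0)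
    (I : Finset Λ) (hI : I.Nonempty) (c : Λ → R) (hc : ∀ η ∈ I, c η ≠ 0)
    (hdle : ∀ η ∈ I, d η ≤ i)
    (hrep : x = ∑ η ∈ I, c η • (tp P R (i - d η) • b η)) :
    IsLeast {ℓ : P | ℓ ≤ i ∧ ∃ y, y ∈ M ∧ y ∈ F.deg ℓ ∧ tp P R (i - ℓ) • y = x}
      (I.sup' hI d) := by
  classical
  set m : P := I.sup' hI d with hm
  have hmi : m ≤ i := Finset.sup'_le hI d hdle
  have hdm : ∀ η ∈ I, d η ≤ m := fun η hη => Finset.le_sup' d hη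
  letI := F.isInternal.chooseDecomposition
  constructor
  · -- membership
    refine ⟨hmi, ?_⟩
    set y0 : F.carrier := ∑ η ∈ I, c η • (tp P R (m - d η) • b η) with hy0
    have hy0m : y0 ∈ F.deg m := by
      refine Submodule.sum_mem _ fun η hη => Submodule.smul_mem _ _ ?_
      have := F.tp_smul_mem (m - d η) (sub_nonneg.2 (hdm η hη)) (d η) (b η) (hb η)
      rwa [add_sub_cancel] at this
    have hsm : tp P R (i - m) • y0 = x := by
      rw [hy0, hrep, Finset.smul_sum]
      refine Finset.sum_congr rfl fun η hη => ?_
      rw [smul_comm, ← mul_smul, ← tp_add (sub_nonneg.2 hmi) (sub_nonneg.2 (hdm η hη)),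
        sub_add_sub_cancel]
    obtain ⟨v, hvM, n, hnN, hvn⟩ := Submodule.mem_sup.1
      (by rw [hcompl.sup_eq_top]; exact Submodule.mem_top : y0 ∈ M ⊔ N)
    set v' : F.carrier := (DirectSum.decompose F.deg v m : F.carrier) with hv'
    set n' : F.carrier := (DirectSum.decompose F.deg n m : F.carrier) with hn'
    have hv'M : v' ∈ M := decompose_mem_of_graded F M hM m hvM
    have hn'N : n' ∈ N := decompose_mem_of_graded F N hN m hnN
    have hv'm : v' ∈ F.deg m := SetLike.coe_mem _
    have hn'm : n' ∈ F.deg m := SetLike.coe_mem _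
    have hsum : v' + n' = y0 := by
      rw [hv', hn', ← Submodule.coe_add, ← DirectSum.add_apply, ← DirectSum.decompose_add,
        hvn, DirectSum.decompose_of_mem_same F.deg hy0m]
    have hx' : tp P R (i - m) • v' + tp P R (i - m) • n' = x := by
      rw [← smul_add, hsum, hsm]
    have hn0 : tp P R (i - m) • n' = 0 := by
      have h1 : tp P R (i - m) • n' ∈ M := by
        have : tp P R (i - m) • n' = x - tp P R (i - m) • v' := by
          rw [← hx']; abel
        rw [this]; exact M.sub_mem hxM (M.smul_mem _ hv'M)
      have h2 : tp P R (i - m) • n' ∈ N := N.smul_mem _ hn'N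
      have h3 := hcompl.inf_eq_bot ▸ (Submodule.mem_inf.2 ⟨h1, h2⟩)
      exact (Submodule.mem_bot _).1 h3
    refine ⟨v', hv'M, hv'm, ?_⟩
    rw [← hx', hn0, add_zero]
  · -- lower bound
    rintro ℓ ⟨hℓi, y, hyM, hyℓ, hty⟩
    refine Finset.sup'_le hI d fun η hη => ?_
    have hrx : b.repr x = ∑ η ∈ I, Finsupp.single η (c η • tp P R (i - d η)) := by
      rw [hrep, map_sum]
      refine Finset.sum_congr rfl fun η' _ => ?_
      rw [← smul_assoc, map_smul, b.repr_self, Finsupp.smul_single', mul_one]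
    have hcoef : c η • tp P R (i - d η) = tp P R (i - ℓ) * b.repr y η := by
      have h1 : b.repr x η = c η • tp P R (i - d η) := by
        rw [hrx, Finsupp.finset_sum_apply]
        rw [Finset.sum_eq_single η (fun η' _ hne => by rw [Finsupp.single_apply, if_neg hne])
          (fun h => absurd hη h), Finsupp.single_eq_same]
      have h2 : b.repr x η = tp P R (i - ℓ) * b.repr y η := by
        rw [← hty, map_smul, Finsupp.smul_apply, smul_eq_mul]
      rw [← h1, h2]
    have hdi : (0:P) ≤ i - d η := sub_nonneg.2 (hdle η hη)
    have hil : (0:P) ≤ i - ℓ := sub_nonneg.2 hℓi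
    rw [tp, tp, dif_pos hdi, dif_pos hil, AddMonoidAlgebra.smul_single', mul_one] at hcoef
    have hmem : (⟨i - d η, hdi⟩ : ↥(AddSubmonoid.nonneg P)) ∈
        (AddMonoidAlgebra.single (⟨i - ℓ, hil⟩ : ↥(AddSubmonoid.nonneg P)) 1
          * b.repr y η).coeff.support := by
      rw [← hcoef]
      rw [AddMonoidAlgebra.coeff_single, Finsupp.support_single_ne_zero _ (hc η hη)]
      exact Finset.mem_singleton_self _
    rw [AddMonoidAlgebra.support_coeff_single_mul _ _ (fun z => by simp) _] at hmem
    obtain ⟨u, _, hu⟩ := Finset.mem_map.1 hmem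
    have huv : (i - ℓ) + (u : P) = i - d η := congrArg Subtype.val hu
    have hu0 : (0:P) ≤ (u : P) := u.2
    have hueq : (u : P) = ℓ - d η := by
      have := eq_sub_of_add_eq' huv
      rw [this]; abel
    rw [hueq] at hu0
    exact sub_nonneg.1 hu0
end

section
/- Under the standing hypotheses, let i ∈ P satisfy M_i ≠ 0, set S = ⋃_{0 ≠ x ∈ M_i} S_x^M, and let μ be a minimal element of S. Then for every s ∈ P with s < μ one has M_s = 0. -/
open scoped DirectSum

variable (P : Type) [AddCommGroup P] [Lattice P]
  [CovariantClass P P (· + ·) (· ≤ ·)] [DecidableEq P]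
variable (R : Type) [CommRing R]

theorem deg_eq_bot_of_lt_minimal [IsDomain R] [IsPrincipalIdealRing R]
    (M : PersMod P R) (hproj : IsGradedProjective P R M) (hFG : ∀ a : P, (M.deg a).FG)
    (i : P) (hi : M.deg i ≠ ⊥) (μ : P)
    (hμS : μ ∈ {ℓ : P | ℓ ≤ i ∧ ∃ x ∈ M.deg i, x ≠ 0 ∧ ∃ y ∈ M.deg ℓ, tp P R (i - ℓ) • y = x})
    (hmin : ∀ s ∈ {ℓ : P | ℓ ≤ i ∧ ∃ x ∈ M.deg i, x ≠ 0 ∧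
      ∃ y ∈ M.deg ℓ, tp P R (i - ℓ) • y = x}, ¬ s < μ) :
    ∀ s : P, s < μ → M.deg s = ⊥ := by
  intro s hs
  obtain ⟨hμi, -⟩ := hμS
  have hsi : s ≤ i := le_trans hs.le hμi
  have hq : (0 : P) ≤ i - s := sub_nonneg.mpr hsi
  rw [Submodule.eq_bot_iff]
  intro z hz
  have hx : tp P R (i - s) • z ∈ M.deg i := by
    have := M.tp_smul_mem (i - s) hq s z hz
    rwa [add_sub_cancel] at this
  have hzero : tp P R (i - s) • z = 0 := by
    by_contra hne
    exact hmin s ⟨hsi, tp P R (i - s) • z, hx, hne, z, hz, rfl⟩ hs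
  obtain ⟨F, ⟨Λ, d, b, -⟩, ι, π, -, -, hπι⟩ := hproj
  have h1 : tp P R (i - s) • ι z = 0 := by rw [← map_smul, hzero, map_zero]
  have hrep : tp P R (i - s) • b.repr (ι z) = 0 := by rw [← map_smul, h1, map_zero]
  have h2 : ι z = 0 := by
    have hr0 : b.repr (ι z) = 0 := by
      ext η a
      have hcoord : tp P R (i - s) * b.repr (ι z) η = 0 := by
        have := congrArg (fun g => g η) hrep
        simpa using this
      rw [tp, dif_pos hq] at hcoord
      have hinj : ∀ a : ↥(AddSubmonoid.nonneg P),
          (⟨i - s, hq⟩ : ↥(AddSubmonoid.nonneg P)) + a =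
            ⟨i - s, hq⟩ + a ↔ a = a := fun a => by simp
      have := AddMonoidAlgebra.coeff_single_mul_add (b.repr (ι z) η) (1 : R)
          (⟨i - s, hq⟩ : ↥(AddSubmonoid.nonneg P)) a
      rw [hcoord] at this
      simpa using this.symm
    have := b.repr.map_eq_zero_iff.mp hr0
    exact this
  have := LinearMap.congr_fun hπι z
  simp only [LinearMap.comp_apply, LinearMap.id_apply] at this
  rw [h2, map_zero] at this
  exact this.symm
end

section
/- Under the standing hypotheses, if M_i ≠ 0 for some i ∈ P, then there exists w ≤ i such that D_w is a proper submodule of M_w; equivalently, M possesses an indecomposable homogeneous element of some degree w ≤ i. -/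
open scoped DirectSum

variable (P : Type) [AddCommGroup P] [Lattice P]
  [CovariantClass P P (· + ·) (· ≤ ·)] [DecidableEq P]
variable (R : Type) [CommRing R]

set_option linter.unusedSectionVars false
set_option linter.unusedVariables false

section Aux

variable {P R}

lemma tp_coe (u : ↥(AddSubmonoid.nonneg P)) :
    tp P R (u : P) = AddMonoidAlgebra.single u (1 : R) := by
  have hu : (0:P) ≤ (u : P) := u.2
  simp only [tp, dif_pos hu]

variable (F : PersMod P R) {Λ : Type} (d : Λ → P) (b : Module.Basis Λ (PersAlg P R) F.carrier)

noncomputable def Gsub (a : P) : Submodule R F.carrier where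
  carrier := {f | ∀ (η : Λ), ∀ u ∈ (b.repr f η).coeff.support, d η + (u : P) = a}
  zero_mem' := by
    intro η u hu
    simp at hu
  add_mem' := by
    intro f g hf hg η u hu
    rw [map_add, Finsupp.add_apply, AddMonoidAlgebra.coeff_add] at hu
    rcases Finset.mem_union.mp (Finsupp.support_add hu) with h | h
    · exact hf η u h
    · exact hg η u h
  smul_mem' := by
    intro r f hf η u hu
    have h1 : b.repr (r • f) = r • b.repr f := map_smul (b.repr.restrictScalars R) r f
    rw [h1, Finsupp.smul_apply, AddMonoidAlgebra.coeff_smul] at hu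
    exact hf η u (Finsupp.support_smul hu)

lemma mem_Gsub {a : P} {f : F.carrier} :
    f ∈ Gsub F d b a ↔ ∀ (η : Λ), ∀ u ∈ (b.repr f η).coeff.support, d η + (u : P) = a :=
  Iff.rfl

lemma single_smul_eq (u : ↥(AddSubmonoid.nonneg P)) (r : R) (y : F.carrier) :
    (AddMonoidAlgebra.single u r : PersAlg P R) • y = r • ((tp P R (u : P)) • y) := by
  rw [tp_coe, ← smul_assoc]
  congr 1
  rw [AddMonoidAlgebra.smul_single', mul_one]

lemma Gsub_le_deg (hb : ∀ η, b η ∈ F.deg (d η)) (a : P) : Gsub F d b a ≤ F.deg a := by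
  intro f hf
  have hrepr : (Finsupp.linearCombination (PersAlg P R) b) (b.repr f) = f :=
    b.linearCombination_repr f
  rw [Finsupp.linearCombination_apply, Finsupp.sum] at hrepr
  rw [← hrepr]
  refine Submodule.sum_mem _ ?_
  intro η _
  rw [show (b.repr f η) = ((b.repr f η).coeff.sum fun u r => AddMonoidAlgebra.single u r) from
    (AddMonoidAlgebra.sum_coeff_single _).symm, Finsupp.sum, Finset.sum_smul]
  refine Submodule.sum_mem _ ?_
  intro u hu
  have hda : d η + (u : P) = a := hf η u hu
  rw [single_smul_eq]
  exact Submodule.smul_mem _ _ (hda ▸ F.tp_smul_mem (u : P) u.2 (d η) (b η) (hb η))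

lemma mem_iSup_Gsub (f : F.carrier) : f ∈ ⨆ a : P, Gsub F d b a := by
  have hrepr : (Finsupp.linearCombination (PersAlg P R) b) (b.repr f) = f :=
    b.linearCombination_repr f
  rw [Finsupp.linearCombination_apply, Finsupp.sum] at hrepr
  rw [← hrepr]
  refine Submodule.sum_mem _ ?_
  intro η _
  rw [show (b.repr f η) = ((b.repr f η).coeff.sum fun u r => AddMonoidAlgebra.single u r) from
    (AddMonoidAlgebra.sum_coeff_single _).symm, Finsupp.sum, Finset.sum_smul]
  refine Submodule.sum_mem _ ?_
  intro u _
  refine Submodule.mem_iSup_of_mem (d η + (u : P)) ?_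
  rw [mem_Gsub]
  intro η' u' hu'
  have h5 : b.repr ((AddMonoidAlgebra.single u ((b.repr f η).coeff u) : PersAlg P R) • b η)
      = (AddMonoidAlgebra.single u ((b.repr f η).coeff u) : PersAlg P R) • Finsupp.single η 1 := by
    rw [map_smul, b.repr_self]
  rw [h5, Finsupp.smul_apply] at hu'
  by_cases h : η = η'
  · subst h
    rw [Finsupp.single_eq_same, smul_eq_mul, mul_one, AddMonoidAlgebra.coeff_single] at hu'
    have := Finsupp.support_single_subset hu'
    rw [Finset.mem_singleton] at this
    subst this
    rfl
  · rw [Finsupp.single_eq_of_ne (Ne.symm h), smul_zero] at hu'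
    simp at hu'


lemma deg_le_Gsub (hb : ∀ η, b η ∈ F.deg (d η)) (a : P) : F.deg a ≤ Gsub F d b a := by
  intro f hf
  obtain ⟨m, hm, hsum⟩ :=
    (Submodule.mem_iSup_iff_exists_finsupp _ _).mp (mem_iSup_Gsub F d b f)
  have hma : ∀ a', m a' ∈ F.deg a' := fun a' => Gsub_le_deg F d b hb a' (hm a')
  have hsum' : ∑ a' ∈ m.support, m a' = f := hsum
  have herase : ∑ a' ∈ m.support.erase a, m a' = f - m a := by
    by_cases ha : a ∈ m.support
    · rw [eq_sub_iff_add_eq, Finset.sum_erase_add _ _ ha]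
      exact hsum'
    · rw [Finset.erase_eq_of_notMem ha, hsum', Finsupp.notMem_support_iff.mp ha, sub_zero]
  have h1 : f - m a ∈ F.deg a := Submodule.sub_mem _ hf (hma a)
  have h2 : f - m a ∈ ⨆ (a' : P) (_ : a' ≠ a), F.deg a' := by
    rw [← herase]
    refine Submodule.sum_mem _ ?_
    intro a' ha'
    exact Submodule.mem_iSup_of_mem a'
      (Submodule.mem_iSup_of_mem (Finset.mem_erase.mp ha').1 (hma a'))
  have hind := iSupIndep_def.mp F.isInternal.submodule_iSupIndep a
  have h0 : f - m a = 0 := Submodule.disjoint_def.mp hind _ h1 h2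
  have hfm : f = m a := by rwa [sub_eq_zero] at h0
  rw [hfm]
  exact hm a

lemma repr_eq_zero_of_not_le (hb : ∀ η, b η ∈ F.deg (d η)) {a : P} {f : F.carrier}
    (hf : f ∈ F.deg a) {η : Λ} (h : ¬ d η ≤ a) : b.repr f η = 0 := by
  by_contra h0
  obtain ⟨u, hu⟩ := Finsupp.support_nonempty_iff.mpr (mt AddMonoidAlgebra.coeff_eq_zero.mp h0)
  have hda : d η + (u : P) = a := deg_le_Gsub F d b hb a hf η u hu
  have hu0 : (0:P) ≤ (u : P) := u.2
  exact h (hda ▸ le_add_of_nonneg_right hu0)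

end Aux

theorem exists_indecomposable [IsDomain R] [IsPrincipalIdealRing R]
    (M : PersMod P R) (hproj : IsGradedProjective P R M) (hFG : ∀ a : P, (M.deg a).FG)
    (i : P) (hi : M.deg i ≠ ⊥) :
    ∃ w ≤ i, Dsub P R M w < M.deg w := by
  classical
  by_contra hcon
  push_neg at hcon
  obtain ⟨F, ⟨Λ, d, b, hb⟩, ι, π, hι, hπ, hπι⟩ := hproj
  have hDle : ∀ w : P, Dsub P R M w ≤ M.deg w := by
    intro w
    refine iSup_le ?_
    rintro ⟨q, hq⟩ y hy
    obtain ⟨m, hm, rfl⟩ := hy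
    have h0 : (0:P) ≤ w - q := sub_nonneg.mpr hq.le
    have h1 := M.tp_smul_mem (w - q) h0 q m hm
    rw [show q + (w - q) = w by abel] at h1
    exact h1
  have hDeq : ∀ w, w ≤ i → Dsub P R M w = M.deg w := by
    intro w hw
    rcases (hDle w).lt_or_eq with h | h
    · exact absurd h (hcon w hw)
    · exact h
  have hπι' : ∀ y : M.carrier, π (ι y) = y := fun y => LinearMap.congr_fun hπι y
  have hstar : ∀ (η : Λ), d η ≤ i → ∀ y ∈ M.deg (d η), b.repr (ι y) η = 0 := by
    intro η hηi y hy
    rw [← hDeq (d η) hηi] at hy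
    have hker : Dsub P R M (d η) ≤ LinearMap.ker ((Finsupp.lapply η).comp
        ((b.repr.toLinearMap.restrictScalars R).comp (ι.restrictScalars R))) := by
      refine iSup_le ?_
      rintro ⟨q, hq⟩ z hz
      obtain ⟨m, hm, rfl⟩ := hz
      have h1 : ι m ∈ F.deg q := hι q m hm
      have h2 : ¬ d η ≤ q := fun hle => absurd (lt_of_le_of_lt hle hq) (lt_irrefl _)
      have h3 : b.repr (ι m) η = 0 := repr_eq_zero_of_not_le F d b hb h1 h2
      rw [LinearMap.mem_ker]
      simp only [LinearMap.coe_comp, Function.comp_apply, LinearMap.coe_restrictScalars,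
        LinearEquiv.coe_coe, Finsupp.lapply_apply, smulMapR, LinearMap.lsmul_apply]
      rw [map_smul, map_smul, Finsupp.smul_apply, h3, smul_zero]
    have hmem := hker hy
    rw [LinearMap.mem_ker] at hmem
    simpa only [LinearMap.coe_comp, Function.comp_apply, LinearMap.coe_restrictScalars,
      LinearEquiv.coe_coe, Finsupp.lapply_apply] using hmem
  apply hi
  rw [eq_bot_iff]
  intro x hx
  have hs : ι x ∈ F.deg i := hι i x hx
  by_cases hcz : b.repr (ι x) = 0
  · have hx0 : ι x = 0 := by
      have h := congrArg b.repr.symm hcz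
      simpa using h
    have hxz : x = 0 := by rw [← hπι' x, hx0, map_zero]
    simp [hxz]
  · exfalso
    set c : Λ →₀ PersAlg P R := b.repr (ι x) with hcdef
    have hT : ∀ η ∈ c.support, d η ≤ i := by
      intro η hη
      obtain ⟨u, hu⟩ := Finsupp.support_nonempty_iff.mpr
        (mt AddMonoidAlgebra.coeff_eq_zero.mp (Finsupp.mem_support_iff.mp hη))
      have h := deg_le_Gsub F d b hb i hs η u hu
      have hu0 : (0:P) ≤ (u : P) := u.2
      exact h ▸ le_add_of_nonneg_right hu0
    have hne : (c.support.image d).Nonempty := by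
      rw [Finset.image_nonempty]
      exact Finsupp.support_nonempty_iff.mpr hcz
    obtain ⟨δ, hδmem, hδmax'⟩ := Finset.exists_maximal hne
    have hδmax : ∀ y ∈ c.support.image d, ¬ δ < y := fun y hy hlt => hlt.not_ge (hδmax' hy hlt.le)
    obtain ⟨η₀, hη₀, hdη₀⟩ := Finset.mem_image.mp hδmem
    have hexp : ι x = ∑ η ∈ c.support, c η • b η := by
      conv_lhs => rw [← b.linearCombination_repr (ι x)]
      rw [Finsupp.linearCombination_apply, Finsupp.sum]
    have hxsum : x = ∑ η ∈ c.support, c η • π (b η) := by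
      conv_lhs => rw [← hπι' x, hexp]
      rw [map_sum]
      simp only [map_smul]
    have hkey : c η₀ = 0 := by
      have h6 : c η₀ = ∑ η ∈ c.support, c η • (b.repr (ι (π (b η))) η₀) := by
        conv_lhs => rw [hcdef, show ι x = ι (∑ η ∈ c.support, c η • π (b η)) from
          congrArg ι hxsum]
        rw [map_sum, map_sum]
        simp only [map_smul]
        rw [Finset.sum_apply']
        simp only [Finsupp.smul_apply]
      rw [h6]
      refine Finset.sum_eq_zero ?_
      intro η hη
      by_cases hle : d η₀ ≤ d η
      · have hnlt : ¬ δ < d η := hδmax (d η) (Finset.mem_image_of_mem d hη)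
        have heq : d η = d η₀ := by
          rcases hle.lt_or_eq with h | h
          · exact absurd (hdη₀ ▸ h) hnlt
          · exact h.symm
        have hy : π (b η) ∈ M.deg (d η₀) := heq ▸ hπ (d η) (b η) (hb η)
        rw [hstar η₀ (hT η₀ hη₀) _ hy, smul_zero]
      · have h7 : b.repr (ι (π (b η))) η₀ = 0 :=
          repr_eq_zero_of_not_le F d b hb (hι _ _ (hπ _ _ (hb η))) hle
        rw [h7, smul_zero]
    exact Finsupp.mem_support_iff.mp hη₀ hkey
end

section
/- Under the standing hypotheses, for every i ∈ P the sum Σ_{r < i} b_r is finite, where b_r is the rank of the free R-module M_r/D_r; in particular, the set { r ∈ P : r < i and D_r ≠ M_r } is finite. -/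
open scoped DirectSum

variable (P : Type) [AddCommGroup P] [Lattice P]
  [CovariantClass P P (· + ·) (· ≤ ·)] [DecidableEq P]
variable (R : Type) [CommRing R]

/-! ### Auxiliary material for the proof -/

section Aux

variable {P R}

local instance (priority := 100) auxOrderedAddCommGroup : IsOrderedAddMonoid P :=
  { add_le_add_left := fun a b h c => by
      rw [add_comm a c, add_comm b c]; exact CovariantClass.elim c h }

lemma tp_of_nonneg {p : P} (h : 0 ≤ p) :
    tp P R p = AddMonoidAlgebra.single (⟨p, h⟩ : ↥(AddSubmonoid.nonneg P)) 1 := by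
  rw [tp, dif_pos h]

lemma tp_zero' : tp P R (0 : P) = 1 := by
  rw [tp_of_nonneg le_rfl]
  rfl

/-- The coordinate functional `x ↦ (repr x η) g`, as an `R`-linear map. -/
noncomputable def coordFn {F : PersMod P R} {Λ : Type} (bb : Module.Basis Λ (PersAlg P R) F.carrier)
    (η : Λ) (g : ↥(AddSubmonoid.nonneg P)) : F.carrier →ₗ[R] R where
  toFun x := (bb.repr x η).coeff g
  map_add' x y := by
    show (bb.repr (x + y) η).coeff g = _
    rw [map_add, Finsupp.add_apply]
    rfl
  map_smul' c x := by
    simp only [RingHom.id_apply]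
    show (bb.repr (c • x) η).coeff g = c • (bb.repr x η).coeff g
    rw [← algebraMap_smul (PersAlg P R) c x, map_smul, Finsupp.smul_apply, smul_eq_mul,
      smul_eq_mul]
    have h1 : (algebraMap R (PersAlg P R)) c = AddMonoidAlgebra.single 0 c := by
      rw [AddMonoidAlgebra.coe_algebraMap]
      simp
    rw [h1, AddMonoidAlgebra.coeff_single_zero_mul]

@[simp] lemma coordFn_apply {F : PersMod P R} {Λ : Type} (bb : Module.Basis Λ (PersAlg P R) F.carrier)
    (η : Λ) (g : ↥(AddSubmonoid.nonneg P)) (x : F.carrier) :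
    coordFn bb η g x = (bb.repr x η).coeff g := rfl

variable {F : PersMod P R} {Λ : Type} {d : Λ → P} {bb : Module.Basis Λ (PersAlg P R) F.carrier}

/-- The span of the homogeneous monomial multiples of the basis in degree `r`. -/
noncomputable def piece (d : Λ → P) (bb : Module.Basis Λ (PersAlg P R) F.carrier) (r : P) :
    Submodule R F.carrier :=
  Submodule.span R {x | ∃ (η : Λ) (g : P) (hg : 0 ≤ g), d η + g = r ∧ x = tp P R g • bb η}

lemma piece_le_deg (hbb : ∀ η, bb η ∈ F.deg (d η)) (r : P) : piece d bb r ≤ F.deg r := by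
  rw [piece, Submodule.span_le]
  rintro x ⟨η, g, hg, hdg, rfl⟩
  have := F.tp_smul_mem g hg (d η) (bb η) (hbb η)
  rwa [hdg] at this

lemma iSup_piece : ⨆ r : P, piece d bb r = ⊤ := by
  rw [eq_top_iff]
  intro x _
  have h1 : ∀ (a : PersAlg P R) (η : Λ), a • bb η ∈ ⨆ r : P, piece d bb r := by
    intro a η
    induction a using AddMonoidAlgebra.induction_linear with
    | zero => rw [zero_smul]; exact zero_mem _
    | add f g hf hg => rw [add_smul]; exact add_mem hf hg
    | single g c =>
      have h2 : (AddMonoidAlgebra.single g c : PersAlg P R) • bb η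
          = c • (tp P R (g : P) • bb η) := by
        rw [tp_of_nonneg g.2, ← smul_assoc, AddMonoidAlgebra.smul_single, smul_eq_mul, mul_one]
      rw [h2]
      refine Submodule.smul_mem _ c (Submodule.mem_iSup_of_mem (d η + (g : P)) ?_)
      exact Submodule.subset_span ⟨η, (g : P), g.2, rfl, rfl⟩
  have := bb.linearCombination_repr x
  rw [← this, Finsupp.linearCombination_apply]
  exact Submodule.finsuppSum_mem _ _ _ _ fun η _ => h1 _ η

lemma deg_le_piece (hbb : ∀ η, bb η ∈ F.deg (d η)) (a : P) : F.deg a ≤ piece d bb a := by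
  intro x hx
  have hxT : x ∈ ⨆ r : P, piece d bb r := by rw [iSup_piece]; trivial
  obtain ⟨f, hf, hsum⟩ := (Submodule.mem_iSup_iff_exists_finsupp _ _).mp hxT
  have hind : iSupIndep F.deg := F.isInternal.submodule_iSupIndep
  classical
  set s : Finset P := insert a f.support with hs
  have hsx : ∑ c ∈ s, f c = x := by
    rw [← hsum, Finsupp.sum]
    exact (Finset.sum_subset (Finset.subset_insert a f.support)
      (fun c _ hc => Finsupp.notMem_support_iff.mp hc)).symm
  have hsplit : f a + ∑ c ∈ s.erase a, f c = x := by
    rw [Finset.add_sum_erase s f (Finset.mem_insert_self a _), hsx]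
  have h1 : x - f a ∈ F.deg a := sub_mem hx (piece_le_deg hbb a (hf a))
  have h2 : x - f a ∈ ⨆ (b : P) (_ : b ≠ a), F.deg b := by
    have he : x - f a = ∑ c ∈ s.erase a, f c := by
      rw [← hsplit, add_sub_cancel_left]
    rw [he]
    refine Submodule.sum_mem _ fun c hc => ?_
    exact Submodule.mem_iSup_of_mem c (Submodule.mem_iSup_of_mem (Finset.ne_of_mem_erase hc)
      (piece_le_deg hbb c (hf c)))
  have h0 : x - f a = 0 := Submodule.disjoint_def.mp (hind a) _ h1 h2
  have : x = f a := by rw [sub_eq_zero] at h0; exact h0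
  rw [this]
  exact hf a

/-- Homogeneous elements have coordinates concentrated in the right degrees. -/
lemma coord_eq_zero (hbb : ∀ η, bb η ∈ F.deg (d η)) {r : P} {x : F.carrier}
    (hx : x ∈ F.deg r) (η : Λ) (g : ↥(AddSubmonoid.nonneg P)) (hne : d η + (g : P) ≠ r) :
    (bb.repr x η).coeff g = 0 := by
  have hker : piece d bb r ≤ LinearMap.ker (coordFn bb η g) := by
    rw [piece, Submodule.span_le]
    rintro y ⟨η', g', hg', hdg, rfl⟩
    simp only [SetLike.mem_coe, LinearMap.mem_ker, coordFn_apply]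
    rw [tp_of_nonneg hg', map_smul, Finsupp.smul_apply, Module.Basis.repr_self, smul_eq_mul]
    rcases eq_or_ne η' η with h | h
    · subst h
      rw [Finsupp.single_eq_same, mul_one, AddMonoidAlgebra.coeff_single, Finsupp.single_apply, if_neg]
      intro hgg
      apply hne
      have : (g : P) = g' := by rw [← hgg]
      rw [this, hdg]
    · rw [Finsupp.single_eq_of_ne' h, mul_zero, AddMonoidAlgebra.coeff_zero, Finsupp.zero_apply]
  exact hker (deg_le_piece hbb r hx)

/-- Coordinates at `0` vanish on `D_r`. -/
lemma Dsub_le_ker_coord (r : P) (η : Λ) :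
    Dsub P R F r ≤ LinearMap.ker (coordFn bb η 0) := by
  refine iSup_le fun q => ?_
  rw [Submodule.map_le_iff_le_comap]
  intro y _
  simp only [Submodule.mem_comap, LinearMap.mem_ker, coordFn_apply]
  have hq0 : (0 : P) < r - q.1 := sub_pos.mpr q.2
  have hcoe : smulMapR P R F (tp P R (r - q.1)) y = tp P R (r - q.1) • y := rfl
  rw [hcoe, tp_of_nonneg hq0.le, map_smul, Finsupp.smul_apply, smul_eq_mul]
  by_contra hne
  classical
  have h0mem : (0 : ↥(AddSubmonoid.nonneg P)) ∈
      (AddMonoidAlgebra.single (⟨r - q.1, hq0.le⟩ : ↥(AddSubmonoid.nonneg P)) 1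
        * bb.repr y η).coeff.support := Finsupp.mem_support_iff.mpr hne
  have hsub := AddMonoidAlgebra.support_coeff_mul_subset
    (AddMonoidAlgebra.single (⟨r - q.1, hq0.le⟩ : ↥(AddSubmonoid.nonneg P)) (1 : R))
    (bb.repr y η) h0mem
  rw [AddMonoidAlgebra.coeff_single, Finset.mem_add] at hsub
  obtain ⟨u, hu, w, _, huw⟩ := hsub
  have hu' : u = (⟨r - q.1, hq0.le⟩ : ↥(AddSubmonoid.nonneg P)) :=
    Finset.mem_singleton.mp (Finsupp.support_single_subset hu)
  subst hu'
  have : (0 : P) < r - q.1 + (w : P) := lt_of_lt_of_le hq0 (le_add_of_nonneg_right w.2)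
  have hz : r - q.1 + (w : P) = 0 := by
    have := congrArg (Subtype.val) huw
    exact this
  rw [hz] at this
  exact lt_irrefl _ this

/-- If all degree-`r` leading coordinates of a homogeneous `x ∈ F_r` vanish, `x ∈ D_r`. -/
lemma mem_Dsub_of_coord (hbb : ∀ η, bb η ∈ F.deg (d η)) {r : P} {x : F.carrier}
    (hx : x ∈ F.deg r) (h0 : ∀ η, d η = r → (bb.repr x η).coeff 0 = 0) :
    x ∈ Dsub P R F r := by
  classical
  set K : Submodule R F.carrier :=
    Submodule.span R (Set.range fun η : {η : Λ // d η = r} => bb η.1) with hK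
  have hsplit : piece d bb r ≤ K ⊔ Dsub P R F r := by
    rw [piece, Submodule.span_le]
    rintro y ⟨η, g, hg, hdg, rfl⟩
    rcases eq_or_ne g 0 with h0' | h0'
    · subst h0'
      rw [tp_zero', one_smul]
      exact Submodule.mem_sup_left (Submodule.subset_span ⟨⟨η, by rwa [add_zero] at hdg⟩, rfl⟩)
    · refine Submodule.mem_sup_right ?_
      have hq : d η < r := by
        have h1 : d η ≤ d η + g := le_add_of_nonneg_right hg
        rw [hdg] at h1
        refine lt_of_le_of_ne h1 fun he => h0' ?_
        rw [← he] at hdg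
        exact (add_eq_left).mp hdg
      have hrg : r - d η = g := by rw [← hdg]; exact add_sub_cancel_left _ _
      refine Submodule.mem_iSup_of_mem ⟨d η, hq⟩ ?_
      refine ⟨bb η, hbb η, ?_⟩
      rw [hrg]
      rfl
  obtain ⟨k, hk, dd, hd, hsum⟩ := Submodule.mem_sup.mp (hsplit (deg_le_piece hbb r hx))
  have hkc : ∀ η : Λ, d η = r → (bb.repr k η).coeff 0 = 0 := by
    intro η hη
    have hx0 := h0 η hη
    have hd0 : (bb.repr dd η).coeff 0 = 0 := Dsub_le_ker_coord r η hd
    have : (bb.repr x η).coeff 0 = (bb.repr k η).coeff 0 + (bb.repr dd η).coeff 0 := by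
      rw [← hsum, map_add, Finsupp.add_apply]
      rfl
    rw [hx0, hd0, add_zero] at this
    exact this.symm
  obtain ⟨c, hc⟩ := Finsupp.mem_span_range_iff_exists_finsupp.mp hk
  have hc0 : ∀ η0 : {η : Λ // d η = r}, c η0 = 0 := by
    intro η0
    have hck := congrArg (coordFn bb η0.1 0) hc
    rw [map_finsuppSum] at hck
    have hval : ∀ η : {η : Λ // d η = r},
        coordFn bb η0.1 0 (bb η.1) = if η = η0 then 1 else 0 := by
      intro η
      simp only [coordFn_apply, Module.Basis.repr_self, Finsupp.single_apply]
      rcases eq_or_ne η η0 with h | h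
      · subst h
        rw [if_pos rfl, if_pos rfl, AddMonoidAlgebra.one_def, AddMonoidAlgebra.coeff_single, Finsupp.single_eq_same]
      · rw [if_neg (fun he => h (Subtype.ext he)), if_neg h, AddMonoidAlgebra.coeff_zero, Finsupp.zero_apply]
    have hsum2 : (c.sum fun η a => a * (if η = η0 then (1 : R) else 0)) = c η0 := by
      rw [Finsupp.sum_congr (g2 := fun η a => if η = η0 then a else 0)
        (fun η _ => by by_cases h : η = η0 <;> simp [h])]
      rw [Finsupp.sum_ite_eq' c η0 fun _ a => a]
      split_ifs with h
      · rfl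
      · exact (Finsupp.notMem_support_iff.mp h).symm
    have hstep : (c.sum fun η a => (coordFn bb η0.1 0) (a • bb η.1))
        = c.sum fun η a => a * (if η = η0 then (1 : R) else 0) :=
      Finsupp.sum_congr fun η _ => by rw [map_smul, hval η, smul_eq_mul]
    rw [hstep, hsum2] at hck
    rw [hck, coordFn_apply]
    exact hkc η0.1 η0.2
  have hk0 : k = 0 := by
    rw [← hc]
    exact Finset.sum_eq_zero fun η _ => by simp [hc0 η]
  rw [← hsum, hk0, zero_add]
  exact hd

/-- Graded maps send `D_r` into `D_r`. -/
lemma map_Dsub_le {M F : PersMod P R} (φ : M.carrier →ₗ[PersAlg P R] F.carrier)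
    (hφ : ∀ a : P, ∀ x ∈ M.deg a, φ x ∈ F.deg a) (r : P) {y : M.carrier}
    (hy : y ∈ Dsub P R M r) : φ y ∈ Dsub P R F r := by
  have : Submodule.map (φ.restrictScalars R) (Dsub P R M r) ≤ Dsub P R F r := by
    rw [Dsub, Submodule.map_iSup]
    refine iSup_le fun q => ?_
    refine le_trans ?_ (le_iSup _ q)
    rw [← Submodule.map_comp]
    have hcomm : (φ.restrictScalars R).comp (smulMapR P R M (tp P R (r - q.1)))
        = (smulMapR P R F (tp P R (r - q.1))).comp (φ.restrictScalars R) := by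
      ext x
      exact map_smul φ _ x
    rw [hcomm, Submodule.map_comp]
    refine Submodule.map_mono ?_
    rw [Submodule.map_le_iff_le_comap]
    intro x hx
    exact hφ q.1 x hx
  exact this ⟨y, hy, rfl⟩

end Aux

theorem sum_b_finite [IsDomain R] [IsPrincipalIdealRing R]
    (M : PersMod P R) (hproj : IsGradedProjective P R M) (hFG : ∀ a : P, (M.deg a).FG)
    (i : P) :
    {r : P | r < i ∧ Dsub P R M r ≠ M.deg r}.Finite ∧
    ∀ r, r < i → Module.Finite R (↥(M.deg r) ⧸ ((Dsub P R M r).comap (M.deg r).subtype)) := by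
  classical
  obtain ⟨F, ⟨Λ, d, bb, hbb⟩, ι, π, hι, hπ, hπι⟩ := hproj
  constructor
  · -- the finiteness of the set of "jump" degrees below i
    set T := {r : P | r < i ∧ Dsub P R M r ≠ M.deg r} with hT
    have hDle : ∀ r : P, Dsub P R M r ≤ M.deg r := by
      intro r
      refine iSup_le fun q => ?_
      rintro y ⟨z, hz, rfl⟩
      have := M.tp_smul_mem (r - q.1) (sub_nonneg.mpr q.2.le) q.1 z hz
      rwa [add_sub_cancel] at this
    have hex : ∀ r : T, ∃ x, x ∈ M.deg r.1 ∧ x ∉ Dsub P R M r.1 := by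
      rintro ⟨r, hri, hne⟩
      obtain ⟨x, hx1, hx2⟩ := SetLike.exists_of_lt (lt_of_le_of_ne (hDle r) hne)
      exact ⟨x, hx1, hx2⟩
    choose x hx hxD using hex
    have hιdeg : ∀ r : T, ι (x r) ∈ F.deg r.1 := fun r => hι _ _ (hx r)
    have hπι' : ∀ z : M.carrier, π (ι z) = z := by
      intro z
      have := LinearMap.ext_iff.mp hπι z
      simpa using this
    have hιD : ∀ r : T, ι (x r) ∉ Dsub P R F r.1 := by
      intro r h
      apply hxD r
      have := map_Dsub_le π hπ r.1 h
      rwa [hπι'] at this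
    have hexη : ∀ r : T, ∃ η : Λ, d η = r.1 ∧ (bb.repr (ι (x r)) η).coeff 0 ≠ 0 := by
      intro r
      by_contra hcon
      push_neg at hcon
      exact hιD r (mem_Dsub_of_coord hbb (hιdeg r) hcon)
    choose η hηd hηc using hexη
    have hvmem : ∀ r : T, tp P R (i - r.1) • x r ∈ M.deg i := by
      intro r
      have := M.tp_smul_mem (i - r.1) (sub_nonneg.mpr r.2.1.le) r.1 (x r) (hx r)
      rwa [add_sub_cancel] at this
    set v : T → ↥(M.deg i) := fun r => ⟨tp P R (i - r.1) • x r, hvmem r⟩ with hv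
    have hli : LinearIndependent R v := by
      rw [linearIndependent_iff]
      intro l hl
      by_contra hl0
      have hsupp : l.support.Nonempty := Finsupp.support_nonempty_iff.mpr hl0
      obtain ⟨r0, hr0mem, hr0max⟩ := Set.Finite.exists_maximalFor (fun r : T => r.1)
        (l.support : Set T) l.support.finite_toSet (by exact_mod_cast hsupp)
      rw [Finset.mem_coe] at hr0mem
      have hg0 : (0 : P) ≤ i - r0.1 := sub_nonneg.mpr r0.2.1.le
      set g0 : ↥(AddSubmonoid.nonneg P) := ⟨i - r0.1, hg0⟩ with hg0def
      set θ : M.carrier →ₗ[R] R := (coordFn bb (η r0) g0).comp (ι.restrictScalars R) with hθ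
      have happ := congrArg (θ.comp (M.deg i).subtype) hl
      rw [map_zero, Finsupp.apply_linearCombination, Finsupp.linearCombination_apply,
        Finsupp.sum] at happ
      -- each non-maximal term vanishes
      have hterm : ∀ r : T, r ∈ l.support → r ≠ r0 →
          (θ.comp (M.deg i).subtype ∘ v) r = 0 := by
        intro r hr hne
        have hnle : ¬ (r0.1 ≤ r.1) := by
          intro hle
          exact hne (Subtype.ext (le_antisymm (hr0max (Finset.mem_coe.mpr hr) hle) hle))
        have hzero : bb.repr (ι (x r)) (η r0) = 0 := by
          ext g
          rw [AddMonoidAlgebra.coeff_zero, Finsupp.zero_apply]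
          refine coord_eq_zero hbb (hιdeg r) (η r0) g ?_
          rw [hηd r0]
          intro he
          exact hnle (he ▸ le_add_of_nonneg_right g.2)
        show θ ((v r : M.carrier)) = 0
        have hvr : (v r : M.carrier) = tp P R (i - r.1) • x r := rfl
        rw [hθ]
        simp only [LinearMap.comp_apply, LinearMap.restrictScalars_apply, coordFn_apply, hvr]
        rw [map_smul ι, map_smul (bb.repr), Finsupp.smul_apply, hzero, smul_zero,
          AddMonoidAlgebra.coeff_zero, Finsupp.zero_apply]
      -- the maximal term is the leading coordinate
      have hterm0 : (θ.comp (M.deg i).subtype ∘ v) r0 = (bb.repr (ι (x r0)) (η r0)).coeff 0 := by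
        show θ ((v r0 : M.carrier)) = _
        have hvr : (v r0 : M.carrier) = tp P R (i - r0.1) • x r0 := rfl
        set f : AddMonoidAlgebra R ↥(AddSubmonoid.nonneg P) := bb.repr (ι (x r0)) (η r0)
          with hf
        have hfs : f = AddMonoidAlgebra.single 0 (f.coeff 0) := by
          ext g
          rcases eq_or_ne g 0 with h | h
          · rw [h, AddMonoidAlgebra.coeff_single, Finsupp.single_eq_same]
          · rw [AddMonoidAlgebra.coeff_single, Finsupp.single_eq_of_ne' (Ne.symm h)]
            refine coord_eq_zero hbb (hιdeg r0) (η r0) g ?_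
            rw [hηd r0]
            intro he
            apply h
            have : (g : P) = 0 := by
              have := add_left_cancel (a := r0.1) (b := (g : P)) (c := 0)
                (by rw [add_zero]; exact he)
              exact this
            exact Subtype.ext this
        rw [hθ]
        simp only [LinearMap.comp_apply, LinearMap.restrictScalars_apply, coordFn_apply, hvr]
        rw [map_smul ι, map_smul (bb.repr), Finsupp.smul_apply, ← hf]
        have htp : tp P R (i - r0.1) = AddMonoidAlgebra.single g0 1 := tp_of_nonneg hg0
        rw [htp, smul_eq_mul]
        conv_lhs => rw [hfs]
        rw [AddMonoidAlgebra.single_mul_single, one_mul, add_zero, AddMonoidAlgebra.coeff_single,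
            Finsupp.single_eq_same]
      rw [Finset.sum_eq_single r0 (fun b hb hbne => by rw [hterm b hb hbne, smul_zero])
        (fun h => absurd hr0mem h), hterm0, smul_eq_mul] at happ
      rcases mul_eq_zero.mp happ with h | h
      · exact Finsupp.mem_support_iff.mp hr0mem h
      · exact hηc r0 h
    haveI : Module.Finite R ↥(M.deg i) := Module.Finite.iff_fg.mpr (hFG i)
    haveI : IsNoetherian R ↥(M.deg i) := isNoetherian_of_isNoetherianRing_of_finite R _
    haveI : Finite ↥T := hli.finite_of_isNoetherian
    exact T.toFinite
  · intro r _
    haveI : Module.Finite R ↥(M.deg r) := Module.Finite.iff_fg.mpr (hFG r)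
    exact Module.Finite.of_surjective
      (Submodule.mkQ ((Dsub P R M r).comap (M.deg r).subtype))
      (Submodule.mkQ_surjective _)
end
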